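/- (Perturbed dynamics.) Let α > 0, set p = min(1, α/3), and suppose the perturbation g satisfies ∫_{t₀}^{+∞} t^p ‖g(t)‖ dt < +∞. Then along any twice continuously differentiable solution x of the perturbed equation ẍ(t) + (α/t)ẋ(t) + ∇Φ(x(t)) = g(t) on [t₀, +∞), the values satisfy Φ(x(t)) − inf Φ = O(1/t^{2p}) as t → +∞, i.e. there exists M ≥ 0 with Φ(x(t)) − inf Φ ≤ M/t^{2p} for all t ≥ t₀. -/

import Mathlib

open RealInnerProductSpace MeasureTheory Set InnerProductSpace

set_option maxHeartbeats 1000000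

/-- perturbed dynamics. Let `p = min(1, α/3)` and suppose
`∫_{t₀}^∞ t^p ‖g(t)‖ dt < ∞`. Then along any solution of
`ẍ(t) + (α/t)ẋ(t) + ∇Φ(x(t)) = g(t)` one has `Φ(x(t)) - inf Φ = O(1/t^{2p})`. -/
theorem stmt_19
    {H : Type*} [NormedAddCommGroup H] [InnerProductSpace ℝ H] [CompleteSpace H]
    (Φ : H → ℝ) (hΦconv : ConvexOn ℝ Set.univ Φ) (hΦC1 : ContDiff ℝ 1 Φ)
    (xstar : H) (hxstar : ∀ y : H, Φ xstar ≤ Φ y)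
    (α t₀ : ℝ) (hα : 0 < α) (ht₀ : 0 < t₀)
    (g : ℝ → H) (hgloc : MeasureTheory.LocallyIntegrableOn g (Set.Ici t₀))
    (p : ℝ) (hp : p = min 1 (α / 3))
    (hint : MeasureTheory.IntegrableOn (fun t : ℝ => t ^ p * ‖g t‖) (Set.Ioi t₀))
    (x : ℝ → H) (hx : ContDiff ℝ 2 x)
    (hode : ∀ t : ℝ, t₀ ≤ t →
      deriv (deriv x) t + (α / t) • deriv x t + gradient Φ (x t) = g t) :
    ∃ M : ℝ, 0 ≤ M ∧ ∀ t : ℝ, t₀ ≤ t → Φ (x t) - Φ xstar ≤ M / t ^ (2 * p) := by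
  classical
  -- parameter facts
  have hp1 : p ≤ 1 := by rw [hp]; exact min_le_left _ _
  have hp3 : 3 * p ≤ α := by
    have := min_le_right 1 (α / 3); rw [hp]; linarith
  have hp0 : 0 < p := by rw [hp]; exact lt_min one_pos (by linarith)
  obtain ⟨c, hcdef⟩ : ∃ y : ℝ, y = 2*p*(1 + α - 4*p) := ⟨_, rfl⟩
  have hc0 : 0 ≤ c := by nlinarith
  have h4c : 0 ≤ 4*p^2 + c := by nlinarith
  -- smoothness facts
  have hΦd : Differentiable ℝ Φ := hΦC1.differentiable one_ne_zero
  have hxd : Differentiable ℝ x := hx.differentiable (by norm_num)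
  have hx' : ContDiff ℝ 1 (deriv x) := by
    have h2 : ContDiff ℝ (1+1) x := by norm_num at hx ⊢; exact hx
    exact (contDiff_succ_iff_deriv.mp h2).2.2
  have hxd2 : Differentiable ℝ (deriv x) := hx'.differentiable one_ne_zero
  have hcA : Continuous (deriv (deriv x)) := (contDiff_one_iff_deriv.mp hx').2
  have hGcont : Continuous (fun y => gradient Φ y) := by
    have h1 : Continuous (fderiv ℝ Φ) := hΦC1.continuous_fderiv one_ne_zero
    exact (toDual ℝ H).symm.continuous.comp h1
  -- convexity inequality
  have hconv : ∀ y : H, Φ y - Φ xstar ≤ ⟪gradient Φ y, y - xstar⟫ := by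
    intro y
    set φ : ℝ → ℝ := fun s => Φ ((AffineMap.lineMap y xstar) s) with hφdef
    have hφconv : ConvexOn ℝ Set.univ φ := by
      have := hΦconv.comp_affineMap (AffineMap.lineMap y xstar)
      exact this
    have hline : HasDerivAt (fun s : ℝ => (AffineMap.lineMap y xstar) s) (xstar - y) 0 := by
      have h := ((hasDerivAt_id (0:ℝ)).smul_const (xstar - y)).add_const y
      have heq : (fun s : ℝ => (AffineMap.lineMap y xstar) s)
          = fun s : ℝ => s • (xstar - y) + y := by
        funext s
        simp only [AffineMap.lineMap_apply_module]
        module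
      rw [heq]; simpa using h
    have hφd : HasDerivAt φ ⟪gradient Φ y, xstar - y⟫ 0 := by
      have hg : HasGradientAt Φ (gradient Φ y) y := (hΦd y).hasGradientAt
      have h3 : HasDerivAt φ (((toDual ℝ H) (gradient Φ y)) (xstar - y)) 0 := by
        refine HasFDerivAt.comp_hasDerivAt (0:ℝ) ?_ hline
        simpa using hg.hasFDerivAt
      simpa [InnerProductSpace.toDual_apply_apply] using h3
    have hs := hφconv.le_slope_of_hasDerivAt (mem_univ (0:ℝ)) (mem_univ (1:ℝ)) zero_lt_one hφd
    rw [slope_def_field] at hs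
    simp only [hφdef, AffineMap.lineMap_apply_one, AffineMap.lineMap_apply_zero] at hs
    have h5 : ⟪gradient Φ y, y - xstar⟫ = - ⟪gradient Φ y, xstar - y⟫ := by
      rw [← inner_neg_right]; rw [neg_sub]
    rw [h5]
    have h4 : ⟪gradient Φ y, xstar - y⟫ ≤ Φ xstar - Φ y := by simpa using hs
    linarith
  -- Lyapunov function
  obtain ⟨θ, hθdef⟩ : ∃ y : ℝ → ℝ, y = fun s => Φ (x s) - Φ xstar := ⟨_, rfl⟩
  obtain ⟨G, hGdef⟩ : ∃ y : ℝ → H, y = fun s => gradient Φ (x s) := ⟨_, rfl⟩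
  obtain ⟨v, hvdef⟩ : ∃ y : ℝ → H, y = fun s => (2*p*s^(p-1)) • (x s - xstar) + s^p • deriv x s := ⟨_, rfl⟩
  obtain ⟨dv, hdvdef⟩ : ∃ y : ℝ → H, y = fun s => (2*p*(p-1)*s^(p-2)) • (x s - xstar)
      + (3*p*s^(p-1)) • deriv x s + s^p • deriv (deriv x) s := ⟨_, rfl⟩
  obtain ⟨W, hWdef⟩ : ∃ y : ℝ → ℝ, y = fun s => s^(2*p) * θ s + (1/2) * ⟪v s, v s⟫
      + c/2 * s^(2*p-2) * ⟪x s - xstar, x s - xstar⟫ := ⟨_, rfl⟩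
  obtain ⟨D, hDdef⟩ : ∃ y : ℝ → ℝ, y = fun s => 2*p*s^(2*p-1) * θ s + s^(2*p) * ⟪G s, deriv x s⟫
      + ⟪v s, dv s⟫ + c/2 * ((2*p-2)*s^(2*p-3)) * ⟪x s - xstar, x s - xstar⟫
      + c * s^(2*p-2) * ⟪x s - xstar, deriv x s⟫ := ⟨_, rfl⟩
  -- derivative of W
  have hW : ∀ s : ℝ, 0 < s → HasDerivAt W (D s) s := by
    intro s hs
    have hrp : ∀ a : ℝ, HasDerivAt (fun u : ℝ => u ^ a) (a * s^(a-1)) s := fun a =>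
      Real.hasDerivAt_rpow_const (Or.inl hs.ne')
    have hxs : HasDerivAt x (deriv x s) s := (hxd s).hasDerivAt
    have hXs : HasDerivAt (fun u => x u - xstar) (deriv x s) s := hxs.sub_const _
    have hVs : HasDerivAt (deriv x) (deriv (deriv x) s) s := (hxd2 s).hasDerivAt
    have hθs : HasDerivAt θ (⟪G s, deriv x s⟫) s := by
      have hg : HasGradientAt Φ (G s) (x s) := by
        simp only [hGdef]; exact (hΦd (x s)).hasGradientAt
      have h3 : HasDerivAt (fun u => Φ (x u)) (((toDual ℝ H) (G s)) (deriv x s)) s :=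
        hg.hasFDerivAt.comp_hasDerivAt s hxs
      simpa [hθdef, InnerProductSpace.toDual_apply_apply] using h3.sub_const (Φ xstar)
    have hvs : HasDerivAt v (dv s) s := by
      have hv1 := ((hrp (p-1)).const_mul (2*p)).smul hXs
      have hv2 := (hrp p).smul hVs
      have h := hv1.add hv2
      have hval : ((2*p*s^(p-1)) • deriv x s + (2*p*((p-1) * s^(p-1-1))) • (x s - xstar))
          + (s^p • deriv (deriv x) s + (p*s^(p-1)) • deriv x s)
          = (2*p*(p-1)*s^(p-2)) • (x s - xstar)
            + (3*p*s^(p-1)) • deriv x s + s^p • deriv (deriv x) s := by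
        rw [show (p-1-1 : ℝ) = p-2 from by ring]
        module
      simp only [hvdef, hdvdef]
      exact hval ▸ h
    have h1 := (hrp (2*p)).mul hθs
    have h2 := (hvs.inner ℝ hvs).const_mul (1/2 : ℝ)
    have h3 := ((hrp (2*p-2)).const_mul (c/2)).mul (hXs.inner ℝ hXs)
    have h := (h1.add h2).add h3
    have hfinal : (2 * p * s ^ (2 * p - 1) * θ s + s ^ (2*p) * ⟪G s, deriv x s⟫
        + 1/2 * (⟪v s, dv s⟫ + ⟪dv s, v s⟫))
        + (c/2 * ((2*p-2) * s^(2*p-2-1)) * ⟪x s - xstar, x s - xstar⟫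
          + c/2 * s^(2*p-2) * (⟪x s - xstar, deriv x s⟫ + ⟪deriv x s, x s - xstar⟫)) = D s := by
      have c1 : ⟪dv s, v s⟫ = ⟪v s, dv s⟫ := real_inner_comm _ _
      have c2 : ⟪deriv x s, x s - xstar⟫ = ⟪x s - xstar, deriv x s⟫ := real_inner_comm _ _
      simp only [hDdef]
      rw [show (2*p-2-1 : ℝ) = 2*p-3 from by ring]
      linear_combination (1/2 : ℝ) * c1 + (c/2 * s^(2*p-2)) * c2
    simp only [hWdef]
    exact hfinal ▸ h
  -- the key differential inequality
  have hDle : ∀ s : ℝ, t₀ ≤ s → D s ≤ s^p * (‖g s‖ * ‖v s‖) := by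
    intro s hst
    have hs : (0:ℝ) < s := lt_of_lt_of_le ht₀ hst
    have hA : deriv (deriv x) s = g s - (α/s) • deriv x s - G s := by
      have h := hode s hst
      simp only [hGdef]
      rw [← h]; abel
    have e1 : s^(2*p) = s^p * s^p := by
      have h := Real.rpow_add hs p p
      rw [show (p + p : ℝ) = 2*p from by ring] at h; exact h
    have e2 : s^(2*p-1) = s^p * s^(p-1) := by
      have h := Real.rpow_add hs p (p-1)
      rw [show (p + (p-1) : ℝ) = 2*p-1 from by ring] at h; exact h
    have e3 : s^(2*p-2) = s^(p-1) * s^(p-1) := by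
      have h := Real.rpow_add hs (p-1) (p-1)
      rw [show ((p-1) + (p-1) : ℝ) = 2*p-2 from by ring] at h; exact h
    have e5 : s^(p-2) = s^(p-1)/s := by
      have h := Real.rpow_add hs (p-1) (-1)
      rw [Real.rpow_neg_one, show ((p-1) + (-1) : ℝ) = p-2 from by ring] at h
      rw [h, div_eq_mul_inv]
    have e4 : s^(2*p-3) = s^(p-1) * (s^(p-1)/s) := by
      have h := Real.rpow_add hs (p-1) (p-2)
      rw [show ((p-1) + (p-2) : ℝ) = 2*p-3 from by ring] at h
      rw [h, e5]
    have e6 : s^p = s * s^(p-1) := by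
      have h := Real.rpow_add hs 1 (p-1)
      rw [Real.rpow_one, show (1 + (p-1) : ℝ) = p from by ring] at h; exact h
    have ha1 : (0:ℝ) ≤ ⟪x s - xstar, x s - xstar⟫ := real_inner_self_nonneg
    have ha3 : (0:ℝ) ≤ ⟪deriv x s, deriv x s⟫ := real_inner_self_nonneg
    have hd1 : θ s ≤ ⟪G s, x s - xstar⟫ := by
      simp only [hθdef, hGdef]; exact hconv (x s)
    -- algebraic identity
    have key : D s = (p-1)*(4*p^2+c) * s^(2*p-3) * ⟪x s - xstar, x s - xstar⟫
        + (3*p-α) * s^(2*p-1) * ⟪deriv x s, deriv x s⟫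
        + 2*p*s^(2*p-1) * (θ s - ⟪G s, x s - xstar⟫)
        + s^p * ⟪v s, g s⟫ := by
      have c1 : ⟪x s - xstar, G s⟫ = ⟪G s, x s - xstar⟫ := real_inner_comm _ _
      have c2 : ⟪deriv x s, G s⟫ = ⟪G s, deriv x s⟫ := real_inner_comm _ _
      have c3 : ⟪deriv x s, x s - xstar⟫ = ⟪x s - xstar, deriv x s⟫ := real_inner_comm _ _
      have hXA : ⟪x s - xstar, deriv (deriv x) s⟫ = ⟪x s - xstar, g s⟫
          - (α/s) * ⟪x s - xstar, deriv x s⟫ - ⟪G s, x s - xstar⟫ := by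
        rw [hA, inner_sub_right, inner_sub_right, real_inner_smul_right, c1]
      have hVA : ⟪deriv x s, deriv (deriv x) s⟫ = ⟪deriv x s, g s⟫
          - (α/s) * ⟪deriv x s, deriv x s⟫ - ⟪G s, deriv x s⟫ := by
        rw [hA, inner_sub_right, inner_sub_right, real_inner_smul_right, c2]
      simp only [hDdef, hdvdef, hvdef, inner_add_left, inner_add_right,
        real_inner_smul_left, real_inner_smul_right, hXA, hVA, c3]
      rw [hcdef, e1, e2, e3, e4, e5, e6]
      field_simp
      ring
    have hvg : ⟪v s, g s⟫ ≤ ‖v s‖ * ‖g s‖ := real_inner_le_norm _ _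
    have hsp0 : (0:ℝ) < s^p := Real.rpow_pos_of_pos hs _
    have h2p10 : (0:ℝ) < s^(2*p-1) := Real.rpow_pos_of_pos hs _
    have h2p30 : (0:ℝ) < s^(2*p-3) := Real.rpow_pos_of_pos hs _
    have l1 : (p-1)*(4*p^2+c) * s^(2*p-3) * ⟪x s - xstar, x s - xstar⟫ ≤ 0 := by
      have h5 : 0 ≤ (4*p^2+c) * s^(2*p-3) * ⟪x s - xstar, x s - xstar⟫ :=
        mul_nonneg (mul_nonneg h4c h2p30.le) ha1
      nlinarith [h5]
    have l2 : (3*p-α) * s^(2*p-1) * ⟪deriv x s, deriv x s⟫ ≤ 0 := by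
      have h5 : 0 ≤ s^(2*p-1) * ⟪deriv x s, deriv x s⟫ := mul_nonneg h2p10.le ha3
      nlinarith [h5]
    have l3 : 2*p*s^(2*p-1) * (θ s - ⟪G s, x s - xstar⟫) ≤ 0 := by
      have h5 : 0 ≤ 2*p*s^(2*p-1) := by positivity
      nlinarith [mul_nonneg h5 (by linarith : (0:ℝ) ≤ ⟪G s, x s - xstar⟫ - θ s)]
    have l4 : s^p * ⟪v s, g s⟫ ≤ s^p * (‖g s‖ * ‖v s‖) := by
      rw [mul_comm (‖g s‖)]
      exact mul_le_mul_of_nonneg_left hvg hsp0.le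
    rw [key]
    linarith [l1, l2, l3, l4]
  -- nonnegativity and lower bound of W
  have hθ0 : ∀ s : ℝ, 0 ≤ θ s := fun s => by
    have := hxstar (x s); rw [hθdef]; simp; linarith
  have hWlb : ∀ s : ℝ, 0 < s → s^(2*p) * θ s ≤ W s ∧ (1/2) * ⟪v s, v s⟫ ≤ W s ∧ 0 ≤ W s := by
    intro s hs
    have h1 : 0 ≤ s^(2*p) * θ s := mul_nonneg (Real.rpow_pos_of_pos hs _).le (hθ0 s)
    have h2 : (0:ℝ) ≤ (1/2) * ⟪v s, v s⟫ := by
      have : (0:ℝ) ≤ ⟪v s, v s⟫ := real_inner_self_nonneg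
      linarith
    have h3 : (0:ℝ) ≤ c/2 * s^(2*p-2) * ⟪x s - xstar, x s - xstar⟫ :=
      mul_nonneg (mul_nonneg (by linarith) (Real.rpow_pos_of_pos hs _).le)
        real_inner_self_nonneg
    refine ⟨by simp only [hWdef]; linarith, by simp only [hWdef]; linarith,
      by simp only [hWdef]; linarith⟩
  -- the auxiliary function u = sqrt (W + 1)
  obtain ⟨u, hudef⟩ : ∃ y : ℝ → ℝ, y = fun s => Real.sqrt (W s + 1) := ⟨_, rfl⟩
  have hu1 : ∀ s : ℝ, 0 < s → 1 ≤ W s + 1 := fun s hs => by linarith [(hWlb s hs).2.2]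
  have hu : ∀ s : ℝ, 0 < s → HasDerivAt u (D s / (2 * Real.sqrt (W s + 1))) s := by
    intro s hs
    have hne : W s + 1 ≠ 0 := by linarith [hu1 s hs]
    have h := (Real.hasDerivAt_sqrt hne).comp s ((hW s hs).add_const 1)
    rw [hudef, show D s / (2 * Real.sqrt (W s + 1)) = 1 / (2 * Real.sqrt (W s + 1)) * D s by ring]
    exact h
  have huderiv_le : ∀ s : ℝ, t₀ ≤ s → D s / (2 * Real.sqrt (W s + 1)) ≤ s^p * ‖g s‖ := by
    intro s hst
    have hs : (0:ℝ) < s := lt_of_lt_of_le ht₀ hst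
    have hsq : (0:ℝ) < Real.sqrt (W s + 1) := Real.sqrt_pos.mpr (by linarith [hu1 s hs])
    have hsqsq : Real.sqrt (W s + 1) ^ 2 = W s + 1 := Real.sq_sqrt (by linarith [hu1 s hs])
    have hv2 : ‖v s‖^2 ≤ 2 * (W s + 1) := by
      have := (hWlb s hs).2.1
      have h6 : ⟪v s, v s⟫ = ‖v s‖^2 := real_inner_self_eq_norm_sq _
      nlinarith [this, h6]
    have hvle : ‖v s‖ ≤ 2 * Real.sqrt (W s + 1) := by
      nlinarith [norm_nonneg (v s), hsq, hsqsq, hv2]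
    have hD := hDle s hst
    rw [div_le_iff₀ (by linarith)]
    calc D s ≤ s^p * (‖g s‖ * ‖v s‖) := hD
      _ ≤ s^p * (‖g s‖ * (2 * Real.sqrt (W s + 1))) := by
          apply mul_le_mul_of_nonneg_left _ (Real.rpow_pos_of_pos hs _).le
          exact mul_le_mul_of_nonneg_left hvle (norm_nonneg _)
      _ = s^p * ‖g s‖ * (2 * Real.sqrt (W s + 1)) := by ring
  -- continuity of D on Ioi 0
  have hrpC : ∀ a : ℝ, ContinuousOn (fun s : ℝ => s ^ a) (Ioi 0) := fun a s hs =>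
    (Real.continuousAt_rpow_const s a (Or.inl (ne_of_gt hs))).continuousWithinAt
  have hcx : Continuous x := hxd.continuous
  have hcV : Continuous (deriv x) := hxd2.continuous
  have hcX : Continuous (fun s => x s - xstar) := hcx.sub continuous_const
  have hcθ : Continuous θ := by
    simp only [hθdef]; exact (hΦC1.continuous.comp hcx).sub continuous_const
  have hcG : Continuous G := by
    simp only [hGdef]; exact hGcont.comp hcx
  have hcv : ContinuousOn v (Ioi 0) := by
    simp only [hvdef]
    apply ContinuousOn.add
    · exact (continuousOn_const.mul (hrpC (p-1))).smul hcX.continuousOn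
    · exact (hrpC p).smul hcV.continuousOn
  have hcdv : ContinuousOn dv (Ioi 0) := by
    simp only [hdvdef]
    apply ContinuousOn.add
    apply ContinuousOn.add
    · exact (continuousOn_const.mul (hrpC (p-2))).smul hcX.continuousOn
    · exact (continuousOn_const.mul (hrpC (p-1))).smul hcV.continuousOn
    · exact (hrpC p).smul hcA.continuousOn
  have hcW : ContinuousOn W (Ioi 0) := by
    simp only [hWdef]
    apply ContinuousOn.add
    apply ContinuousOn.add
    · exact (hrpC (2*p)).mul hcθ.continuousOn
    · exact continuousOn_const.mul (hcv.inner hcv)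
    · exact (continuousOn_const.mul (hrpC (2*p-2))).mul
        (hcX.continuousOn.inner hcX.continuousOn)
  have hcD : ContinuousOn D (Ioi 0) := by
    simp only [hDdef]
    apply ContinuousOn.add
    apply ContinuousOn.add
    apply ContinuousOn.add
    apply ContinuousOn.add
    · exact (continuousOn_const.mul (hrpC (2*p-1))).mul hcθ.continuousOn
    · exact (hrpC (2*p)).mul (hcG.continuousOn.inner hcV.continuousOn)
    · exact hcv.inner hcdv
    · exact (continuousOn_const.mul (continuousOn_const.mul (hrpC (2*p-3)))).mul
        (hcX.continuousOn.inner hcX.continuousOn)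
    · exact (continuousOn_const.mul (hrpC (2*p-2))).mul
        (hcX.continuousOn.inner hcV.continuousOn)
  -- the integral bound
  obtain ⟨I, hIdef⟩ : ∃ y : ℝ, y = ∫ s in Ioi t₀, s ^ p * ‖g s‖ := ⟨_, rfl⟩
  have hI0 : 0 ≤ I := by
    rw [hIdef]
    apply setIntegral_nonneg measurableSet_Ioi
    intro s hs
    have hs0 : (0:ℝ) < s := lt_trans ht₀ hs
    positivity
  have hmain : ∀ t : ℝ, t₀ ≤ t → u t ≤ u t₀ + I := by
    intro t ht
    have hIcc : Icc t₀ t ⊆ Ioi 0 := fun s hs => lt_of_lt_of_le ht₀ hs.1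
    have huint : IntervalIntegrable (fun s : ℝ => D s / (2 * Real.sqrt (W s + 1))) volume t₀ t := by
      apply ContinuousOn.intervalIntegrable
      rw [uIcc_of_le ht]
      apply ContinuousOn.div (hcD.mono hIcc)
      · exact (continuousOn_const.mul ((hcW.mono hIcc).add continuousOn_const).sqrt)
      · intro s hs
        have : (0:ℝ) < Real.sqrt (W s + 1) :=
          Real.sqrt_pos.mpr (by linarith [hu1 s (lt_of_lt_of_le ht₀ hs.1)])
        positivity
    have hftc : ∫ s in t₀..t, D s / (2 * Real.sqrt (W s + 1)) = u t - u t₀ := by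
      apply intervalIntegral.integral_eq_sub_of_hasDerivAt
      · intro s hsm
        rw [uIcc_of_le ht] at hsm
        exact hu s (lt_of_lt_of_le ht₀ hsm.1)
      · exact huint
    have hgint : IntervalIntegrable (fun s : ℝ => s ^ p * ‖g s‖) volume t₀ t := by
      rw [intervalIntegrable_iff_integrableOn_Ioc_of_le ht]
      exact hint.mono_set Ioc_subset_Ioi_self
    have hmono : ∫ s in t₀..t, D s / (2 * Real.sqrt (W s + 1))
        ≤ ∫ s in t₀..t, s ^ p * ‖g s‖ :=
      intervalIntegral.integral_mono_on ht huint hgint (fun s hs => huderiv_le s hs.1)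
    have htail : ∫ s in t₀..t, s ^ p * ‖g s‖ ≤ I := by
      rw [intervalIntegral.integral_of_le ht, hIdef]
      apply setIntegral_mono_set hint
      · filter_upwards [ae_restrict_mem measurableSet_Ioi] with s hs
        have hs0 : (0:ℝ) < s := lt_trans ht₀ hs
        positivity
      · exact (Ioc_subset_Ioi_self).eventuallyLE
    linarith [hftc, hmono, htail]
  -- conclusion
  refine ⟨(u t₀ + I)^2, by positivity, ?_⟩
  intro t ht
  have ht0 : (0:ℝ) < t := lt_of_lt_of_le ht₀ ht
  have htp : (0:ℝ) < t ^ (2*p) := Real.rpow_pos_of_pos ht0 _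
  rw [le_div_iff₀ htp]
  have h1 : t^(2*p) * θ t ≤ W t := (hWlb t ht0).1
  have h2 : W t + 1 = (u t)^2 := by
    simp only [hudef]; exact (Real.sq_sqrt (by linarith [hu1 t ht0])).symm
  have h3 : u t ≤ u t₀ + I := hmain t ht
  have h4 : 0 ≤ u t := by rw [hudef]; exact Real.sqrt_nonneg _
  have h5 : (u t)^2 ≤ (u t₀ + I)^2 := by nlinarith
  have hθt : Φ (x t) - Φ xstar = θ t := by simp only [hθdef]
  rw [hθt]
  nlinarith [h1, h2, h5]
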